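/- A consumption experiment E = ((x^t, m^t), B^t)_{t=1}^T can be rationalized by a quasilinear utility function if and only if there exist real numbers u_1, ..., u_T satisfying u_t − u_s ≥ μ^t(x^s) − μ^t(x^t) for every pair of indices t, s ∈ {1,...,T}. -/
import Mathlib


/-- Remark: QL rationalizability is equivalent to solvability of the finite system of
Afriat-type quasilinear inequalities `u_t − u_s ≥ μ^t(x^s) − μ^t(x^t)`. -/
theorem ql_rationalizable_iff_afriat_inequalities {n T : ℕ} (hT : 0 < T)
    (X : Set (Fin n → ℝ)) (xs : Fin T → (Fin n → ℝ)) (hxX : ∀ t, xs t ∈ X)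
    (μ : Fin T → (Fin n → ℝ) → ℝ)
    (hcont : ∀ t, ContinuousOn (μ t) X)
    (hdecr : ∀ t, ∀ x ∈ X, ∀ y ∈ X, x ≤ y → μ t y ≤ μ t x)
    (hsdecr : ∀ t, ∀ x ∈ X, ∀ y ∈ X, x < y → μ t y < μ t x) :
    (∃ u : (Fin n → ℝ) → ℝ,
      ∀ t, ∀ x ∈ X, ∀ m : ℝ, m ≤ μ t x → u x + m ≤ u (xs t) + μ t (xs t)) ↔
    (∃ uv : Fin T → ℝ, ∀ t s : Fin T,
      uv t - uv s ≥ μ t (xs s) - μ t (xs t)) := by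
  constructor
  · rintro ⟨u, hu⟩
    refine ⟨fun t => u (xs t), fun t s => ?_⟩
    have := hu t (xs s) (hxX s) (μ t (xs s)) le_rfl
    linarith
  · rintro ⟨uv, huv⟩
    haveI : Nonempty (Fin T) := ⟨⟨0, hT⟩⟩
    set u : (Fin n → ℝ) → ℝ :=
      fun x => Finset.univ.inf' Finset.univ_nonempty
        (fun t => uv t + μ t (xs t) - μ t x) with hu
    have hle : ∀ x t, u x ≤ uv t + μ t (xs t) - μ t x := fun x t =>
      Finset.inf'_le _ (Finset.mem_univ t)
    have hxt : ∀ t, u (xs t) = uv t := by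
      intro t
      apply le_antisymm
      · simpa using hle (xs t) t
      · apply Finset.le_inf'
        intro s _
        have := huv s t
        linarith
    refine ⟨u, fun t x _ m hm => ?_⟩
    have := hle x t
    rw [hxt t]
    linarith
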